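/- Let K be a field, S = K[x₁,…,xₙ], and let f ∈ S be a square-free supported polynomial. If f = f₁ ⋯ f_t is a factorization of f with every factor f_i irreducible in S, then each f_i is a square-free supported polynomial. -/
import Mathlib


/-- A multivariate polynomial is *square-free supported* if every monomial in its support
is square-free, i.e. every variable occurs with exponent at most `1`. -/
def SquarefreeSupported {R : Type*} [CommSemiring R] {n : ℕ}
    (f : MvPolynomial (Fin n) R) : Prop :=
  ∀ m ∈ f.support, ∀ i : Fin n, m i ≤ 1

lemma degreeOf_mul_eq_aux {K : Type*} [Field K] {n : ℕ}
    (p q : MvPolynomial (Fin (n + 1)) K) (hp : p ≠ 0) (hq : q ≠ 0) :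
    MvPolynomial.degreeOf 0 (p * q) =
      MvPolynomial.degreeOf 0 p + MvPolynomial.degreeOf 0 q := by
  have hp' : MvPolynomial.finSuccEquiv K n p ≠ 0 := by
    simpa using (map_ne_zero_iff _ (MvPolynomial.finSuccEquiv K n).injective).mpr hp
  have hq' : MvPolynomial.finSuccEquiv K n q ≠ 0 := by
    simpa using (map_ne_zero_iff _ (MvPolynomial.finSuccEquiv K n).injective).mpr hq
  rw [← MvPolynomial.natDegree_finSuccEquiv, ← MvPolynomial.natDegree_finSuccEquiv,
    ← MvPolynomial.natDegree_finSuccEquiv, map_mul, Polynomial.natDegree_mul hp' hq']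

lemma degreeOf_mul_eq' {K : Type*} [Field K] {n : ℕ} (i : Fin n)
    (p q : MvPolynomial (Fin n) K) (hp : p ≠ 0) (hq : q ≠ 0) :
    MvPolynomial.degreeOf i (p * q) =
      MvPolynomial.degreeOf i p + MvPolynomial.degreeOf i q := by
  have hn : 0 < n := i.pos
  obtain ⟨m, rfl⟩ : ∃ m, n = m + 1 := ⟨n - 1, by omega⟩
  set e : Fin (m + 1) ≃ Fin (m + 1) := Equiv.swap i 0 with he
  have h0 : e i = 0 := Equiv.swap_apply_left i 0
  have key : ∀ r : MvPolynomial (Fin (m + 1)) K,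
      MvPolynomial.degreeOf i r =
        MvPolynomial.degreeOf 0 (MvPolynomial.rename e r) := by
    intro r
    rw [← h0, MvPolynomial.degreeOf_rename_of_injective e.injective]
  have hp' : MvPolynomial.rename (e : Fin (m+1) → Fin (m+1)) p ≠ 0 := by
    simpa using (MvPolynomial.rename_injective _ e.injective).ne_iff.mpr
      (by simpa using hp : p ≠ (0 : MvPolynomial (Fin (m+1)) K))
  have hq' : MvPolynomial.rename (e : Fin (m+1) → Fin (m+1)) q ≠ 0 := by
    simpa using (MvPolynomial.rename_injective _ e.injective).ne_iff.mpr
      (by simpa using hq : q ≠ (0 : MvPolynomial (Fin (m+1)) K))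
  rw [key, key, key, map_mul]
  exact degreeOf_mul_eq_aux _ _ hp' hq'

/-- If `f` is square-free supported and `f = f₁ ⋯ f_t` with each `fᵢ`
irreducible, then each `fᵢ` is square-free supported. -/
theorem squarefreeSupported_of_irreducible_factor {K : Type*} [Field K] {n t : ℕ}
    (f : MvPolynomial (Fin n) K) (hf : SquarefreeSupported f)
    (fs : Fin t → MvPolynomial (Fin n) K) (hprod : f = ∏ i, fs i)
    (hirr : ∀ i, Irreducible (fs i)) :
    ∀ i, SquarefreeSupported (fs i) := by
  intro j m hm i
  -- `fs j` divides `f`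
  have hdvd : fs j ∣ f := hprod ▸ Finset.dvd_prod_of_mem fs (Finset.mem_univ j)
  obtain ⟨g, hg⟩ := hdvd
  have hfne : f ≠ 0 := by
    rw [hprod]
    exact Finset.prod_ne_zero_iff.mpr fun k _ => (hirr k).ne_zero
  have hgne : g ≠ 0 := fun h => hfne (by rw [hg, h, mul_zero])
  have hdeg : MvPolynomial.degreeOf i f ≤ 1 :=
    MvPolynomial.degreeOf_le_iff.mpr fun m' hm' => hf m' hm' i
  have : MvPolynomial.degreeOf i (fs j) ≤ 1 := by
    have := degreeOf_mul_eq' i (fs j) g (hirr j).ne_zero hgne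
    rw [← hg] at this
    omega
  exact MvPolynomial.degreeOf_le_iff.mp this m hm
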